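/- Let z0,…,z4 be five distinct points in ℂ ∪ {∞}, and for i = 0,…,4 let (w0^i, w1^i, w2^i) be flattenings of the ideal simplices Δ_i = [z0,…,ẑ_i,…,z4]. The flattening condition (for each of the ten edges, the signed sum of the three associated log-parameters is zero, sign positive iff the omitted index is even) is equivalent to the ten equations: w0^2−w0^3+w0^4 = 0, −w0^1−w2^3+w2^4 = 0, w0^0−w1^3+w1^4 = 0, w2^0+w1^2+w2^4 = 0, w1^0−w1^1+w0^4 = 0, w2^0−w2^1−w0^3 = 0, w0^0−w0^1+w0^2 = 0, −w2^1+w2^2+w1^4 = 0, −w1^1+w1^2−w1^3 = 0, w1^0+w2^2−w2^3 = 0. Moreover, any five of these ten equations chosen so that each w-coordinate appears imply the remaining ones given that w0^i + w1^i + w2^i = 0 for all i. -/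

import Mathlib

open Finset

/-- Position of the vertex `a` of the 4-simplex inside the 3-simplex `Δ_i`
obtained by omitting vertex `i` (induced vertex ordering). -/
def posIn (i a : Fin 5) : Fin 4 :=
  ⟨if (a : ℕ) < (i : ℕ) then (a : ℕ) else (a : ℕ) - 1, by
    have ha := a.isLt; have hi := i.isLt; split <;> omega⟩

/-- The log-parameter coordinate (0, 1 or 2) attached to the edge of a 3-simplex
joining its `p`-th and `q`-th vertices: `w0` on edges 01 and 23, `w1` on edges 12
and 03, `w2` on edges 02 and 13. -/
def edgeIdx (p q : Fin 4) : Fin 3 :=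
  if (p = 0 ∧ q = 1) ∨ (p = 1 ∧ q = 0) ∨ (p = 2 ∧ q = 3) ∨ (p = 3 ∧ q = 2) then 0
  else if (p = 1 ∧ q = 2) ∨ (p = 2 ∧ q = 1) ∨ (p = 0 ∧ q = 3) ∨ (p = 3 ∧ q = 0) then 1
  else 2

/-- The flattening condition: for each edge `[z_a z_b]` of the 4-simplex on `z0,…,z4`,
the signed sum of the three associated log-parameters is zero (sign positive iff the
omitted index is even). -/
def FlatteningCondition (w : Fin 5 → Fin 3 → ℂ) : Prop :=
  ∀ a b : Fin 5, a ≠ b →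
    ∑ i ∈ Finset.univ.filter (fun i : Fin 5 => i ≠ a ∧ i ≠ b),
      ((-1 : ℂ) ^ (i : ℕ)) * w i (edgeIdx (posIn i a) (posIn i b)) = 0

/-- The ten equations. -/
def TenEquations (w : Fin 5 → Fin 3 → ℂ) : Prop :=
  w 2 0 - w 3 0 + w 4 0 = 0 ∧ -w 1 0 - w 3 2 + w 4 2 = 0 ∧
  w 0 0 - w 3 1 + w 4 1 = 0 ∧ w 0 2 + w 2 1 + w 4 2 = 0 ∧
  w 0 1 - w 1 1 + w 4 0 = 0 ∧ w 0 2 - w 1 2 - w 3 0 = 0 ∧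
  w 0 0 - w 1 0 + w 2 0 = 0 ∧ -w 1 2 + w 2 2 + w 4 1 = 0 ∧
  -w 1 1 + w 2 1 - w 3 1 = 0 ∧ w 0 1 + w 2 2 - w 3 2 = 0

set_option maxHeartbeats 1600000 in
/-- the flattening condition is equivalent to the ten equations; moreover
five of them (those for the edges `[z0z1]`, `[z1z2]`, `[z2z3]`, `[z3z4]`, `[z4z0]`,
in which every `w`-coordinate appears) together with `w0^i + w1^i + w2^i = 0` imply
the remaining ones. -/
theorem flattening_condition_ten_equations (w : Fin 5 → Fin 3 → ℂ)
    (hsum : ∀ i : Fin 5, w i 0 + w i 1 + w i 2 = 0) :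
    (FlatteningCondition w ↔ TenEquations w) ∧
    ((w 2 0 - w 3 0 + w 4 0 = 0 ∧ w 0 0 - w 3 1 + w 4 1 = 0 ∧
      w 0 1 - w 1 1 + w 4 0 = 0 ∧ w 0 0 - w 1 0 + w 2 0 = 0 ∧
      -w 1 1 + w 2 1 - w 3 1 = 0) → TenEquations w) := by
  refine ⟨⟨fun h => ?_, fun h => ?_⟩, fun h => ?_⟩
  · have h01 := h 0 1 (by decide); have h02 := h 0 2 (by decide)
    have h03 := h 0 3 (by decide); have h04 := h 0 4 (by decide)
    have h12 := h 1 2 (by decide); have h13 := h 1 3 (by decide)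
    have h14 := h 1 4 (by decide); have h23 := h 2 3 (by decide)
    have h24 := h 2 4 (by decide); have h34 := h 3 4 (by decide)
    simp only [Finset.sum_filter, Fin.sum_univ_five, posIn, edgeIdx] at h01 h02 h03 h04 h12 h13 h14 h23 h24 h34
    norm_num [Finset.sum_filter, Fin.sum_univ_five, posIn, edgeIdx, Fin.ext_iff, show ((0:Fin 5):ℕ)=0 from rfl, show ((1:Fin 5):ℕ)=1 from rfl, show ((2:Fin 5):ℕ)=2 from rfl, show ((3:Fin 5):ℕ)=3 from rfl, show ((4:Fin 5):ℕ)=4 from rfl, show ((0:Fin 4):ℕ)=0 from rfl, show ((1:Fin 4):ℕ)=1 from rfl, show ((2:Fin 4):ℕ)=2 from rfl, show ((3:Fin 4):ℕ)=3 from rfl, show ((0:Fin 3):ℕ)=0 from rfl, show ((1:Fin 3):ℕ)=1 from rfl, show ((2:Fin 3):ℕ)=2 from rfl] at h01 h02 h03 h04 h12 h13 h14 h23 h24 h34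
    exact ⟨by linear_combination h01, by linear_combination h02, by linear_combination h12,
      by linear_combination h13, by linear_combination h23, by linear_combination h24,
      by linear_combination h34, by linear_combination h03, by linear_combination h04,
      by linear_combination h14⟩
  · obtain ⟨e1, e2, e3, e4, e5, e6, e7, e8, e9, e10⟩ := h
    intro a b hab
    fin_cases a <;> fin_cases b <;>
      first
        | exact absurd rfl hab
        | (simp only [Finset.sum_filter, Fin.sum_univ_five, posIn, edgeIdx]
           norm_num [Finset.sum_filter, Fin.sum_univ_five, posIn, edgeIdx, Fin.ext_iff, show ((0:Fin 5):ℕ)=0 from rfl, show ((1:Fin 5):ℕ)=1 from rfl, show ((2:Fin 5):ℕ)=2 from rfl, show ((3:Fin 5):ℕ)=3 from rfl, show ((4:Fin 5):ℕ)=4 from rfl, show ((0:Fin 4):ℕ)=0 from rfl, show ((1:Fin 4):ℕ)=1 from rfl, show ((2:Fin 4):ℕ)=2 from rfl, show ((3:Fin 4):ℕ)=3 from rfl, show ((0:Fin 3):ℕ)=0 from rfl, show ((1:Fin 3):ℕ)=1 from rfl, show ((2:Fin 3):ℕ)=2 from rfl]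
           first
             | linear_combination e1 | linear_combination e2 | linear_combination e3
             | linear_combination e4 | linear_combination e5 | linear_combination e6
             | linear_combination e7 | linear_combination e8 | linear_combination e9
             | linear_combination e10)
  · obtain ⟨e1, e2, e3, e4, e5⟩ := h
    refine ⟨e1, ?_, e2, ?_, e3, ?_, e4, ?_, e5, ?_⟩
    · linear_combination -e1 - e2 + e4 - hsum 3 + hsum 4
    · linear_combination -e2 - e3 + e5 + hsum 0 + hsum 4
    · linear_combination e1 - e3 - e4 + hsum 0 - hsum 1
    · linear_combination e2 - e4 - e5 - hsum 1 + hsum 2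
    · linear_combination -e1 + e3 - e5 + hsum 2 - hsum 3
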